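/- arXiv:2209.00587 — 2 statements merged into one kernel-verified Lean document; each statement's English description precedes it below -/
import Mathlib

section
/- Let μ and ν be probability measures on ℝ^d, let Ω ⊂ ℝ^d contain the support of μ, and let 0 < α ≤ 1. Then ‖(μ−ν)·1_Ω‖_{C^{0,α}_*} ≥ (1/2)‖μ−ν‖_{C^{0,α}_*}. -/
open MeasureTheory Metric

/-- Dual full Hölder-`α` norm of the signed measure `(μ - ν)·1_S`:
`sup { ∫_S f d(μ-ν) : |f|_{Ċ^{0,α}} + ‖f‖_∞ ≤ 1 }` over continuous test functions on `ℝ^d`. -/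
noncomputable def dualHolderFullOn2 {d : ℕ} (α : ℝ) (S : Set (EuclideanSpace ℝ (Fin d)))
    (μ ν : Measure (EuclideanSpace ℝ (Fin d))) : ℝ :=
  sSup {r : ℝ | ∃ f : EuclideanSpace ℝ (Fin d) → ℝ, Continuous f ∧
    (∃ a b : ℝ, 0 ≤ a ∧ 0 ≤ b ∧ a + b ≤ 1 ∧
      (∀ x y, |f x - f y| ≤ a * dist x y ^ α) ∧ (∀ x, |f x| ≤ b)) ∧
    r = (∫ x in S, f x ∂μ) - ∫ x in S, f x ∂ν}

lemma aux_integrable {d : ℕ} (μ : Measure (EuclideanSpace ℝ (Fin d)))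
    [IsFiniteMeasure μ] (f : EuclideanSpace ℝ (Fin d) → ℝ) (b : ℝ)
    (hf : Continuous f) (hb : ∀ x, |f x| ≤ b) : Integrable f μ := by
  refine (integrable_const b).mono' hf.aestronglyMeasurable ?_
  exact Filter.Eventually.of_forall fun x => by simpa using hb x

lemma aux_abs_integral_le {d : ℕ} (μ : Measure (EuclideanSpace ℝ (Fin d)))
    [IsFiniteMeasure μ] (S : Set (EuclideanSpace ℝ (Fin d)))
    (f : EuclideanSpace ℝ (Fin d) → ℝ) (b : ℝ)
    (hb : ∀ x, |f x| ≤ b) :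
    |∫ x in S, f x ∂μ| ≤ b * (μ S).toReal := by
  have h := norm_integral_le_of_norm_le_const (μ := μ.restrict S) (f := f) (C := b)
    (Filter.Eventually.of_forall fun x => by simpa using hb x)
  simpa [Measure.restrict_apply_univ, measureReal_def] using h

lemma aux_bddAbove {d : ℕ} (α : ℝ) (S : Set (EuclideanSpace ℝ (Fin d)))
    (μ ν : Measure (EuclideanSpace ℝ (Fin d)))
    [IsProbabilityMeasure μ] [IsProbabilityMeasure ν] :
    BddAbove {r : ℝ | ∃ f : EuclideanSpace ℝ (Fin d) → ℝ, Continuous f ∧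
    (∃ a b : ℝ, 0 ≤ a ∧ 0 ≤ b ∧ a + b ≤ 1 ∧
      (∀ x y, |f x - f y| ≤ a * dist x y ^ α) ∧ (∀ x, |f x| ≤ b)) ∧
    r = (∫ x in S, f x ∂μ) - ∫ x in S, f x ∂ν} := by
  refine ⟨2, fun r hr => ?_⟩
  obtain ⟨f, hf, ⟨a, b, ha, hb, hab, hH, hB⟩, hr⟩ := hr
  have hb1 : b ≤ 1 := le_trans (by linarith) hab
  have h1 := aux_abs_integral_le μ S f b hB
  have h2 := aux_abs_integral_le ν S f b hB
  have hμS : (μ S).toReal ≤ 1 := by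
    simpa using ENNReal.toReal_mono (by simp) (prob_le_one (μ := μ) (s := S))
  have hνS : (ν S).toReal ≤ 1 := by
    simpa using ENNReal.toReal_mono (by simp) (prob_le_one (μ := ν) (s := S))
  have hbμ : b * (μ S).toReal ≤ 1 := le_trans
    (mul_le_mul hb1 hμS ENNReal.toReal_nonneg zero_le_one) (by norm_num)
  have hbν : b * (ν S).toReal ≤ 1 := le_trans
    (mul_le_mul hb1 hνS ENNReal.toReal_nonneg zero_le_one) (by norm_num)
  rw [hr]
  have := abs_le.mp h1
  have := abs_le.mp h2
  linarith [(abs_le.mp h1).2, (abs_le.mp h2).1]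

lemma aux_zero_mem {d : ℕ} (α : ℝ) (S : Set (EuclideanSpace ℝ (Fin d)))
    (μ ν : Measure (EuclideanSpace ℝ (Fin d))) :
    (0 : ℝ) ∈ {r : ℝ | ∃ f : EuclideanSpace ℝ (Fin d) → ℝ, Continuous f ∧
    (∃ a b : ℝ, 0 ≤ a ∧ 0 ≤ b ∧ a + b ≤ 1 ∧
      (∀ x y, |f x - f y| ≤ a * dist x y ^ α) ∧ (∀ x, |f x| ≤ b)) ∧
    r = (∫ x in S, f x ∂μ) - ∫ x in S, f x ∂ν} := by
  exact ⟨fun _ => 0, continuous_const, ⟨0, 0, le_refl _, le_refl _, by norm_num,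
    fun x y => by simp, fun x => by simp⟩, by simp⟩

/-- If `μ, ν` are probability measures on `ℝ^d`, `Ω` contains the support of `μ`, and
`0 < α ≤ 1`, then `‖(μ-ν)·1_Ω‖_{C^{0,α}_*} ≥ (1/2) ‖μ-ν‖_{C^{0,α}_*}`. -/
theorem dual_norm_restriction_ge_half (d : ℕ) (α : ℝ) (hα0 : 0 < α) (hα1 : α ≤ 1)
    (μ ν : Measure (EuclideanSpace ℝ (Fin d)))
    (hμ : IsProbabilityMeasure μ) (hν : IsProbabilityMeasure ν)
    (Ω : Set (EuclideanSpace ℝ (Fin d))) (hΩmeas : MeasurableSet Ω)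
    (hsupp : μ Ωᶜ = 0) :
    dualHolderFullOn2 α Ω μ ν ≥ (1 / 2) * dualHolderFullOn2 α Set.univ μ ν := by
  have hbddΩ := aux_bddAbove α Ω μ ν
  have hμΩ : μ Ω = 1 := by
    have := measure_add_measure_compl (μ := μ) hΩmeas
    rw [hsupp, add_zero] at this; simpa using this
  -- D Ω ≥ (ν Ωᶜ).toReal using constant test function 1
  have hνc : (ν Ωᶜ).toReal = 1 - (ν Ω).toReal := by
    have := measure_add_measure_compl (μ := ν) hΩmeas
    have hfin : ν Ω ≠ ⊤ := measure_ne_top ν Ω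
    have hfin' : ν Ωᶜ ≠ ⊤ := measure_ne_top ν Ωᶜ
    have h1 : (ν Ω).toReal + (ν Ωᶜ).toReal = 1 := by
      rw [← ENNReal.toReal_add hfin hfin', this]; simp
    linarith
  have hDΩ_ge : (ν Ωᶜ).toReal ≤ dualHolderFullOn2 α Ω μ ν := by
    apply le_csSup hbddΩ
    refine ⟨fun _ => 1, continuous_const, ⟨0, 1, le_refl _, zero_le_one, by norm_num,
      fun x y => by simp, fun x => by simp⟩, ?_⟩
    simp only [integral_const, smul_eq_mul, mul_one, measureReal_def, Measure.restrict_apply_univ]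
    rw [hμΩ, hνc]
    simp
  have hDΩ_nonneg : 0 ≤ dualHolderFullOn2 α Ω μ ν :=
    le_csSup hbddΩ (aux_zero_mem α Ω μ ν)
  -- Every element of the univ set is ≤ 2 * D Ω
  have hkey : dualHolderFullOn2 α Set.univ μ ν ≤ 2 * dualHolderFullOn2 α Ω μ ν := by
    apply Real.sSup_le
    · rintro r ⟨f, hf, ⟨a, b, ha, hb, hab, hH, hB⟩, hr⟩
      have hb1 : b ≤ 1 := le_trans (by linarith) hab
      have hintμ : Integrable f μ := aux_integrable μ f b hf hB
      have hintν : Integrable f ν := aux_integrable ν f b hf hB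
      have hμsplit : (∫ x in Set.univ, f x ∂μ) = ∫ x in Ω, f x ∂μ := by
        rw [setIntegral_univ, ← integral_add_compl hΩmeas hintμ]
        have : μ.restrict Ωᶜ = 0 := Measure.restrict_eq_zero.mpr hsupp
        rw [this]; simp
      have hνsplit : (∫ x in Set.univ, f x ∂ν)
          = (∫ x in Ω, f x ∂ν) + ∫ x in Ωᶜ, f x ∂ν := by
        rw [setIntegral_univ, ← integral_add_compl hΩmeas hintν]
      have hmem : (∫ x in Ω, f x ∂μ) - ∫ x in Ω, f x ∂ν ≤ dualHolderFullOn2 α Ω μ ν :=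
        le_csSup hbddΩ ⟨f, hf, ⟨a, b, ha, hb, hab, hH, hB⟩, rfl⟩
      have htail : |∫ x in Ωᶜ, f x ∂ν| ≤ b * (ν Ωᶜ).toReal :=
        aux_abs_integral_le ν Ωᶜ f b hB
      have htail' : b * (ν Ωᶜ).toReal ≤ (ν Ωᶜ).toReal := by
        nlinarith [ENNReal.toReal_nonneg (a := ν Ωᶜ)]
      rw [hr, hμsplit, hνsplit]
      have := (abs_le.mp htail).1
      linarith
    · linarith
  linarith
end

section
/- Let (μ_N) be a sequence of probability measures on ℝ^d with densities uniformly bounded by M := sup_N ‖μ_N‖_{L^∞} < ∞, and let ν_N = (1/N)∑_{i=1}^N δ_{x_i^N} be atomic probability measures with N atoms. Then for every 0 < α ≤ 1 there is a constant C > 0 depending only on d, α, and M such that ‖μ_N − ν_N‖_{C^{0,α}_*} ≥ C N^{−α/d} for all N. -/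
open MeasureTheory Metric ENNReal

lemma rpow_abs_sub_abs {α : ℝ} (hα0 : 0 < α) (hα1 : α ≤ 1) {s t : ℝ}
    (hs : 0 ≤ s) (ht : 0 ≤ t) : |s ^ α - t ^ α| ≤ |s - t| ^ α := by
  wlog h : t ≤ s generalizing s t
  · rw [abs_sub_comm, abs_sub_comm s t]; exact this ht hs (le_of_not_ge h)
  rw [abs_of_nonneg (sub_nonneg.2 (Real.rpow_le_rpow ht h hα0.le)),
      abs_of_nonneg (sub_nonneg.2 h)]
  have key : s ^ α ≤ (s - t) ^ α + t ^ α := by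
    have h2 := NNReal.rpow_add_le_add_rpow (s - t).toNNReal t.toNNReal hα0.le hα1
    have hst : (s - t).toNNReal + t.toNNReal = s.toNNReal := by
      rw [← Real.toNNReal_add (by linarith) ht]; congr 1; ring
    rw [hst] at h2
    have h3 := NNReal.coe_le_coe.2 h2
    push_cast [NNReal.coe_rpow] at h3
    rwa [Real.coe_toNNReal s hs, Real.coe_toNNReal _ (by linarith : (0:ℝ) ≤ s - t),
      Real.coe_toNNReal t ht] at h3
  linarith

/-- Dual full Hölder-`α` norm of `μ - ν`:
`sup { ∫ f d(μ-ν) : |f|_{Ċ^{0,α}} + ‖f‖_∞ ≤ 1 }`. -/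
noncomputable def dualHolderFull3 {d : ℕ} (α : ℝ)
    (μ ν : Measure (EuclideanSpace ℝ (Fin d))) : ℝ :=
  sSup {r : ℝ | ∃ f : EuclideanSpace ℝ (Fin d) → ℝ, Continuous f ∧
    (∃ a b : ℝ, 0 ≤ a ∧ 0 ≤ b ∧ a + b ≤ 1 ∧
      (∀ x y, |f x - f y| ≤ a * dist x y ^ α) ∧ (∀ x, |f x| ≤ b)) ∧
    r = (∫ x, f x ∂μ) - ∫ x, f x ∂ν}

/-- If `(μ_N)` are probability measures with densities uniformly bounded by `M` and
`ν_N = (1/N) ∑_{i=1}^N δ_{x_i^N}` are atomic probability measures with `N` atoms, then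
`‖μ_N - ν_N‖_{C^{0,α}_*} ≥ C N^{-α/d}` for a constant `C > 0` depending only on
`d`, `α` and `M`. -/
theorem dual_norm_atomic_lower_bound (d : ℕ) (hd : 0 < d) (α : ℝ) (hα0 : 0 < α) (hα1 : α ≤ 1)
    (M : ℝ) (hM : 0 < M) :
    ∃ C : ℝ, 0 < C ∧
      ∀ (μ : ℕ → Measure (EuclideanSpace ℝ (Fin d)))
        (x : (N : ℕ) → Fin N → EuclideanSpace ℝ (Fin d)),
        (∀ N, IsProbabilityMeasure (μ N)) →
        (∀ N (s : Set (EuclideanSpace ℝ (Fin d))),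
            μ N s ≤ ENNReal.ofReal M * volume s) →
        ∀ N : ℕ, 0 < N →
          dualHolderFull3 α (μ N)
              ((N : ℝ≥0∞)⁻¹ • ∑ i : Fin N, Measure.dirac (x N i)) ≥
            C * (N : ℝ) ^ (-(α / d)) := by
  set E := EuclideanSpace ℝ (Fin d)
  have hdR : (0:ℝ) < d := Nat.cast_pos.2 hd
  set K : ℝ := (volume (ball (0:E) 1)).toReal with hK
  have hKpos : 0 < K := by
    apply ENNReal.toReal_pos (measure_ball_pos volume _ one_pos).ne' measure_ball_lt_top.ne
  set lam : ℝ := min (((2*(M*K))⁻¹) ^ ((1:ℝ)/d)) 1 with hlam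
  have hMK : (0:ℝ) < 2*(M*K) := by positivity
  have hlampos : 0 < lam := lt_min (Real.rpow_pos_of_pos (by positivity) _) one_pos
  have hlamle1 : lam ≤ 1 := min_le_right _ _
  have hlamd : lam ^ d ≤ (2*(M*K))⁻¹ := by
    calc lam ^ d ≤ (((2*(M*K))⁻¹) ^ ((1:ℝ)/d)) ^ d := by
          exact pow_le_pow_left₀ hlampos.le (min_le_left _ _) d
      _ = (2*(M*K))⁻¹ := by
          rw [← Real.rpow_natCast (((2*(M*K))⁻¹) ^ ((1:ℝ)/d)) d, ← Real.rpow_mul (by positivity)]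
          rw [one_div, inv_mul_cancel₀ (by positivity : (d:ℝ) ≠ 0), Real.rpow_one]
  refine ⟨lam ^ α / 4, by positivity, ?_⟩
  intro μ x hprob hbound N hN
  haveI := hprob N
  set r : ℝ := lam * (N:ℝ) ^ (-(1:ℝ)/d) with hr
  have hNR : (0:ℝ) < N := Nat.cast_pos.2 hN
  have hrpos : 0 < r := by positivity
  have hrle1 : r ≤ 1 := by
    have : (N:ℝ) ^ (-(1:ℝ)/d) ≤ 1 := by
      apply Real.rpow_le_one_of_one_le_of_nonpos (by exact_mod_cast hN)
      rw [neg_div]; simp [le_of_lt, div_nonneg, hdR.le]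
    calc r ≤ lam * 1 := by
          apply mul_le_mul_of_nonneg_left this hlampos.le
      _ ≤ 1 := by rw [mul_one]; exact hlamle1
  -- the test function
  set S' : Set E := Set.range (x N) with hS'
  have hS'ne : S'.Nonempty := ⟨x N ⟨0, hN⟩, Set.mem_range_self _⟩
  set φ : E → ℝ := fun y => max (r ^ α - infDist y S' ^ α) 0 with hφ
  have hφcont : Continuous φ :=
    ((continuous_const.sub ((continuous_infDist_pt S').rpow_const
      (fun y => Or.inr hα0.le))).max continuous_const)
  have hφnonneg : ∀ y, 0 ≤ φ y := fun y => le_max_right _ _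
  have hφle : ∀ y, φ y ≤ r ^ α := by
    intro y
    apply max_le _ (Real.rpow_nonneg hrpos.le α)
    have : 0 ≤ infDist y S' ^ α := Real.rpow_nonneg infDist_nonneg α
    linarith
  have hφatom : ∀ i : Fin N, φ (x N i) = r ^ α := by
    intro i
    have : infDist (x N i) S' = 0 := infDist_zero_of_mem (Set.mem_range_self i)
    simp [hφ, this, Real.zero_rpow hα0.ne', max_eq_left (Real.rpow_nonneg hrpos.le α)]
  have hφholder : ∀ y z : E, |φ y - φ z| ≤ dist y z ^ α := by
    intro y z
    have h1 : |φ y - φ z| ≤ |(r ^ α - infDist y S' ^ α) - (r ^ α - infDist z S' ^ α)| :=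
      abs_max_sub_max_le_abs _ _ _
    have h2 : (r ^ α - infDist y S' ^ α) - (r ^ α - infDist z S' ^ α)
        = infDist z S' ^ α - infDist y S' ^ α := by ring
    rw [h2] at h1
    refine h1.trans ((rpow_abs_sub_abs hα0 hα1 infDist_nonneg infDist_nonneg).trans ?_)
    apply Real.rpow_le_rpow (abs_nonneg _) _ hα0.le
    have := (lipschitz_infDist_pt S').dist_le_mul z y
    rwa [Real.dist_eq, NNReal.coe_one, one_mul, dist_comm z y] at this
  -- support
  set S : Set E := ⋃ i, closedBall (x N i) r with hS
  have hSmeas : MeasurableSet S := MeasurableSet.iUnion (fun i => measurableSet_closedBall)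
  have hφsupp : ∀ y ∉ S, φ y = 0 := by
    intro y hy
    have hge : r ≤ infDist y S' := by
      by_contra hc
      push_neg at hc
      obtain ⟨z, ⟨i, rfl⟩, hz⟩ := (infDist_lt_iff hS'ne).1 hc
      exact hy (Set.mem_iUnion.2 ⟨i, by rw [mem_closedBall]; exact hz.le⟩)
    have : r ^ α ≤ infDist y S' ^ α := Real.rpow_le_rpow hrpos.le hge hα0.le
    simp [hφ, max_eq_right, sub_nonpos.2 this]
  -- integrability
  have hφint : ∀ (m : Measure E), IsFiniteMeasure m → Integrable φ m := by
    intro m hm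
    exact (integrable_const (r ^ α)).mono' hφcont.aestronglyMeasurable
      (Filter.Eventually.of_forall fun y => by
        rw [Real.norm_eq_abs, abs_of_nonneg (hφnonneg y)]; exact hφle y)
  -- the atomic measure
  set ν : Measure E := (N : ℝ≥0∞)⁻¹ • ∑ i : Fin N, Measure.dirac (x N i) with hν
  haveI hνprob : IsProbabilityMeasure ν := by
    constructor
    rw [hν]
    simp only [Measure.smul_apply, Measure.coe_finset_sum, Finset.sum_apply,
      Measure.dirac_apply_of_mem (Set.mem_univ _), Finset.sum_const, Finset.card_univ,
      Fintype.card_fin, nsmul_eq_mul, mul_one, smul_eq_mul]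
    exact ENNReal.inv_mul_cancel (Nat.cast_ne_zero.2 hN.ne') (natCast_ne_top N)
  -- integral against ν
  have hφν : ∫ y, φ y ∂ν = r ^ α := by
    rw [hν, integral_smul_measure, integral_finset_sum_measure
      (fun i _ => hφint _ inferInstance)]
    simp only [integral_dirac, hφatom]
    simp only [Finset.sum_const, Finset.card_univ, Fintype.card_fin, nsmul_eq_mul]
    rw [ENNReal.toReal_inv, ENNReal.toReal_natCast, smul_eq_mul]
    field_simp
  -- integral against μ
  have hrd : (N:ℝ) * r ^ d = lam ^ d := by
    rw [hr, mul_pow, ← Real.rpow_natCast ((N:ℝ) ^ (-(1:ℝ)/d)) d,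
      ← Real.rpow_mul (by positivity)]
    have : (-(1:ℝ)/d) * d = -1 := by field_simp
    rw [this, Real.rpow_neg_one]
    field_simp
  have hμS : (μ N S).toReal ≤ M * ((N:ℝ) * (r ^ d * K)) := by
    have hvolS : volume S ≤ (N : ℝ≥0∞) * (ENNReal.ofReal (r ^ d) * volume (ball (0:E) 1)) := by
      calc volume S ≤ ∑' i : Fin N, volume (closedBall (x N i) r) := measure_iUnion_le _
        _ = ∑ i : Fin N, volume (closedBall (x N i) r) := tsum_fintype _
        _ = (N : ℝ≥0∞) * (ENNReal.ofReal (r ^ d) * volume (ball (0:E) 1)) := by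
            have : ∀ i : Fin N, volume (closedBall (x N i) r)
                = ENNReal.ofReal (r ^ d) * volume (ball (0:E) 1) := by
              intro i
              rw [Measure.addHaar_closedBall volume _ hrpos.le]
              congr 2
              simp [finrank_euclideanSpace_fin]
            simp [this, Finset.sum_const, Finset.card_univ, Fintype.card_fin, nsmul_eq_mul]
    have hB : μ N S ≤ ENNReal.ofReal M * ((N : ℝ≥0∞) * (ENNReal.ofReal (r ^ d) * volume (ball (0:E) 1))) :=
      (hbound N S).trans (mul_le_mul_right hvolS _)
    have hBfin : ENNReal.ofReal M * ((N : ℝ≥0∞) * (ENNReal.ofReal (r ^ d) * volume (ball (0:E) 1))) ≠ ⊤ := by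
      apply ENNReal.mul_ne_top ofReal_ne_top
      apply ENNReal.mul_ne_top (natCast_ne_top N)
      exact ENNReal.mul_ne_top ofReal_ne_top measure_ball_lt_top.ne
    calc (μ N S).toReal ≤ (ENNReal.ofReal M * ((N : ℝ≥0∞) * (ENNReal.ofReal (r ^ d) * volume (ball (0:E) 1)))).toReal :=
          ENNReal.toReal_mono hBfin hB
      _ = M * ((N:ℝ) * (r ^ d * K)) := by
          rw [ENNReal.toReal_mul, ENNReal.toReal_mul, ENNReal.toReal_mul,
            ENNReal.toReal_ofReal hM.le, ENNReal.toReal_ofReal (by positivity),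
            ENNReal.toReal_natCast]
  have hφμ : ∫ y, φ y ∂(μ N) ≤ r ^ α / 2 := by
    have hind : ∫ y, φ y ∂(μ N) ≤ ∫ y, S.indicator (fun _ => r ^ α) y ∂(μ N) := by
      apply integral_mono (hφint _ inferInstance)
        ((integrable_const (r ^ α)).indicator hSmeas)
      intro y
      by_cases hy : y ∈ S
      · simp [Set.indicator_of_mem hy, hφle y]
      · simp [Set.indicator_of_notMem hy, hφsupp y hy]
    rw [integral_indicator_const _ hSmeas, smul_eq_mul, measureReal_def] at hind
    have h2 : (μ N S).toReal * r ^ α ≤ (1/2) * r ^ α := by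
      apply mul_le_mul_of_nonneg_right _ (Real.rpow_nonneg hrpos.le α)
      calc (μ N S).toReal ≤ M * ((N:ℝ) * (r ^ d * K)) := hμS
        _ = (M * K) * ((N:ℝ) * r ^ d) := by ring
        _ = (M * K) * lam ^ d := by rw [hrd]
        _ ≤ (M * K) * (2*(M*K))⁻¹ := by
            apply mul_le_mul_of_nonneg_left hlamd (by positivity)
        _ = 1/2 := by field_simp
    linarith
  -- the chosen test function
  set f : E → ℝ := fun y => (-(1:ℝ)/2) * φ y with hf
  have hfmem : ((∫ y, f y ∂(μ N)) - ∫ y, f y ∂ν) ∈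
      {t : ℝ | ∃ g : E → ℝ, Continuous g ∧
        (∃ a b : ℝ, 0 ≤ a ∧ 0 ≤ b ∧ a + b ≤ 1 ∧
          (∀ y z, |g y - g z| ≤ a * dist y z ^ α) ∧ (∀ y, |g y| ≤ b)) ∧
        t = (∫ y, g y ∂(μ N)) - ∫ y, g y ∂ν} := by
    refine ⟨f, continuous_const.mul hφcont, ⟨1/2, 1/2, by norm_num, by norm_num, by norm_num,
      ?_, ?_⟩, rfl⟩
    · intro y z
      have : |f y - f z| = (1/2) * |φ y - φ z| := by
        rw [hf]; simp only
        rw [← mul_sub, abs_mul]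
        norm_num
      rw [this]
      exact mul_le_mul_of_nonneg_left (hφholder y z) (by norm_num)
    · intro y
      have : |f y| = (1/2) * φ y := by
        rw [hf]; simp only
        rw [abs_mul, abs_of_nonneg (hφnonneg y)]
        norm_num
      rw [this]
      have : φ y ≤ 1 := (hφle y).trans (Real.rpow_le_one hrpos.le hrle1 hα0.le)
      linarith
  -- bounded above
  have hbdd : BddAbove {t : ℝ | ∃ g : E → ℝ, Continuous g ∧
        (∃ a b : ℝ, 0 ≤ a ∧ 0 ≤ b ∧ a + b ≤ 1 ∧
          (∀ y z, |g y - g z| ≤ a * dist y z ^ α) ∧ (∀ y, |g y| ≤ b)) ∧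
        t = (∫ y, g y ∂(μ N)) - ∫ y, g y ∂ν} := by
    refine ⟨2, ?_⟩
    rintro t ⟨g, hgc, ⟨a, b, ha, hb, hab, hga, hgb⟩, rfl⟩
    have hb1 : b ≤ 1 := by linarith
    have h1 : ‖∫ y, g y ∂(μ N)‖ ≤ b * ((μ N) Set.univ).toReal :=
      norm_integral_le_of_norm_le_const (Filter.Eventually.of_forall fun y => by
        rw [Real.norm_eq_abs]; exact hgb y)
    have h2 : ‖∫ y, g y ∂ν‖ ≤ b * (ν Set.univ).toReal :=
      norm_integral_le_of_norm_le_const (Filter.Eventually.of_forall fun y => by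
        rw [Real.norm_eq_abs]; exact hgb y)
    rw [measure_univ, ENNReal.toReal_one, mul_one] at h1 h2
    calc (∫ y, g y ∂(μ N)) - ∫ y, g y ∂ν ≤ ‖∫ y, g y ∂(μ N)‖ + ‖∫ y, g y ∂ν‖ := by
          have := Real.le_norm_self (∫ y, g y ∂(μ N))
          have := neg_le_of_abs_le (le_refl ‖∫ y, g y ∂ν‖)
          calc (∫ y, g y ∂(μ N)) - ∫ y, g y ∂ν
              ≤ ‖∫ y, g y ∂(μ N)‖ - ∫ y, g y ∂ν := by
                linarith [Real.le_norm_self (∫ y, g y ∂(μ N))]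
            _ ≤ ‖∫ y, g y ∂(μ N)‖ + ‖∫ y, g y ∂ν‖ := by
                have : -(∫ y, g y ∂ν) ≤ ‖∫ y, g y ∂ν‖ := by
                  rw [← norm_neg]; exact Real.le_norm_self _
                linarith
      _ ≤ 2 := by linarith
  -- conclude
  have hval : (∫ y, f y ∂(μ N)) - ∫ y, f y ∂ν ≥ lam ^ α / 4 * (N:ℝ) ^ (-(α/d)) := by
    have hfμ : ∫ y, f y ∂(μ N) = (-(1:ℝ)/2) * ∫ y, φ y ∂(μ N) := by
      simp only [hf]; exact integral_const_mul _ _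
    have hfν : ∫ y, f y ∂ν = (-(1:ℝ)/2) * ∫ y, φ y ∂ν := by
      simp only [hf]; exact integral_const_mul _ _
    have hra : r ^ α = lam ^ α * (N:ℝ) ^ (-(α/d)) := by
      rw [hr, Real.mul_rpow hlampos.le (by positivity), ← Real.rpow_mul hNR.le]
      congr 2
      ring
    have h4 : (-(1:ℝ)/2) * (∫ y, φ y ∂(μ N)) - (-(1:ℝ)/2) * (r ^ α) ≥ r ^ α / 4 := by
      linarith [hφμ]
    rw [hra] at h4
    rw [hfμ, hfν, hφν]
    linarith [h4]
  calc dualHolderFull3 α (μ N) ν ≥ (∫ y, f y ∂(μ N)) - ∫ y, f y ∂ν := le_csSup hbdd hfmem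
    _ ≥ lam ^ α / 4 * (N:ℝ) ^ (-(α/d)) := hval
end
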